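/- Let G = (V,E) be a simple graph and let G_E = (V' = V ∪ X_E, E') be its subdivision graph. Let A ⊆ V' be a subset with vol_{G_E}(V' ∖ A) ≤ (1/2)·vol_{G_E}(A). Then vol_{G_E}(A) ≤ 8·|A ∩ X_E| ≤ 8·|A|. -/

import Mathlib

open scoped Classical

/-- The subdivision graph of `G`: vertices are the original (regular) vertices
together with one split node per edge, and each edge `{u,v}` of `G` is replaced by
the two edges `{u, x_e}` and `{v, x_e}`. -/
def Subdivision {V : Type*} (G : SimpleGraph V) : SimpleGraph (V ⊕ G.edgeSet) where
  Adj x y := ∃ (u : V) (e : G.edgeSet), u ∈ (e : Sym2 V) ∧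
    ((x = Sum.inl u ∧ y = Sum.inr e) ∨ (x = Sum.inr e ∧ y = Sum.inl u))
  symm := by
    constructor
    rintro x y ⟨u, e, hu, (⟨hx, hy⟩ | ⟨hx, hy⟩)⟩
    · exact ⟨u, e, hu, Or.inr ⟨hy, hx⟩⟩
    · exact ⟨u, e, hu, Or.inl ⟨hy, hx⟩⟩
  loopless := by
    constructor
    rintro x ⟨u, e, hu, (⟨hx, hy⟩ | ⟨hx, hy⟩)⟩ <;> subst hx <;> simp_all

/-- The volume of a finite set of vertices: the sum of their degrees. -/
noncomputable def vol {α : Type*} [Fintype α] (H : SimpleGraph α) (S : Finset α) : ℕ :=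
  ∑ x ∈ S, H.degree x

/-- The number of edges of `H` with one endpoint in `S` and the other outside `S`. -/
noncomputable def crossCount {α : Type*} [Fintype α] (H : SimpleGraph α) (S : Finset α) : ℕ :=
  (H.edgeFinset.filter (fun e => (∃ u ∈ e, u ∈ S) ∧ (∃ u ∈ e, u ∉ S))).card

/-- A set `S` of vertices of the subdivision graph respects the subdivision of `G`
if every split node both of whose neighbors are in `S` is itself in `S`, and
every split node both of whose neighbors are outside `S` is itself outside `S`. -/
def RespectsSubdivision {V : Type*} (G : SimpleGraph V)
    (S : Finset (V ⊕ G.edgeSet)) : Prop :=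
  ∀ (u v : V) (h : G.Adj u v),
    ((Sum.inl u ∈ S ∧ Sum.inl v ∈ S) → Sum.inr ⟨s(u,v), G.mem_edgeSet.mpr h⟩ ∈ S) ∧
    ((Sum.inl u ∉ S ∧ Sum.inl v ∉ S) → Sum.inr ⟨s(u,v), G.mem_edgeSet.mpr h⟩ ∉ S)

/-- The set of regular (original) vertices of `G` belonging to a set `S` of
vertices of the subdivision graph. -/
noncomputable def regularPart {V : Type*} [Fintype V] (G : SimpleGraph V)
    (S : Finset (V ⊕ G.edgeSet)) : Finset V :=
  Finset.univ.filter (fun u => Sum.inl u ∈ S)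

lemma subdiv_not_adj_inl_inl {V : Type*} (G : SimpleGraph V) (u v : V) :
    ¬ (Subdivision G).Adj (Sum.inl u) (Sum.inl v) := by
  rintro ⟨w, e, hw, (⟨h1, h2⟩ | ⟨h1, h2⟩)⟩ <;> simp_all

lemma subdiv_deg_inr {V : Type*} [Fintype V] (G : SimpleGraph V) (e : G.edgeSet) :
    (Subdivision G).degree (Sum.inr e) = 2 := by
  classical
  obtain ⟨e, he⟩ := e
  induction e using Sym2.ind with
  | _ a b =>
    have hab : G.Adj a b := G.mem_edgeSet.mp he
    have hne : a ≠ b := hab.ne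
    have : (Subdivision G).neighborFinset (Sum.inr ⟨s(a,b), he⟩) =
        {Sum.inl a, Sum.inl b} := by
      ext y
      simp only [SimpleGraph.mem_neighborFinset, Finset.mem_insert, Finset.mem_singleton]
      constructor
      · rintro ⟨u, e', hu, (⟨h1, h2⟩ | ⟨h1, h2⟩)⟩
        · simp at h1
        · rw [Sum.inr.injEq] at h1
          subst h1
          simp only [Sym2.mem_iff] at hu
          rcases hu with h | h <;> subst h <;> simp [h2]
      · rintro (rfl | rfl)
        · exact ⟨a, ⟨s(a,b), he⟩, by simp, Or.inr ⟨rfl, rfl⟩⟩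
        · exact ⟨b, ⟨s(a,b), he⟩, by simp, Or.inr ⟨rfl, rfl⟩⟩
    rw [← SimpleGraph.card_neighborFinset_eq_degree, this]
    rw [Finset.card_insert_of_notMem (by simp [hne]), Finset.card_singleton]

lemma deg_eq_sum {α : Type*} [Fintype α] (H : SimpleGraph α) (x : α) :
    H.degree x = ∑ y : α, if H.Adj x y then 1 else 0 := by
  classical
  rw [← SimpleGraph.card_neighborFinset_eq_degree]
  have : H.neighborFinset x = Finset.univ.filter (H.Adj x) := by
    ext y; simp [SimpleGraph.mem_neighborFinset]
  rw [this, Finset.card_filter]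

lemma key_ineq {V : Type*} [Fintype V] (G : SimpleGraph V)
    (A : Finset (V ⊕ G.edgeSet)) :
    vol (Subdivision G) A ≤ 4 * (A.filter (fun x => x.isRight)).card
      + vol (Subdivision G) Aᶜ := by
  classical
  set H := Subdivision G with hH
  set X := A.filter (fun x => x.isRight) with hX
  set R := A.filter (fun x => ¬ x.isRight) with hR
  have hXdeg : ∀ x ∈ X, H.degree x = 2 := by
    intro x hx
    rw [hX, Finset.mem_filter] at hx
    obtain ⟨e, rfl⟩ := Sum.isRight_iff.mp hx.2
    exact subdiv_deg_inr G e
  have hsplit : vol H A = ∑ x ∈ X, H.degree x + ∑ x ∈ R, H.degree x := by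
    rw [vol, ← Finset.sum_filter_add_sum_filter_not A (fun x => x.isRight)]
  have hXsum : ∑ x ∈ X, H.degree x = 2 * X.card := by
    rw [Finset.sum_congr rfl hXdeg, Finset.sum_const, smul_eq_mul, mul_comm]
  -- bound the regular part
  have hRsum : ∑ x ∈ R, H.degree x ≤ 2 * X.card + vol H Aᶜ := by
    have h1 : ∑ x ∈ R, H.degree x = ∑ y : V ⊕ G.edgeSet, ∑ x ∈ R, if H.Adj x y then 1 else 0 := by
      rw [Finset.sum_comm]
      exact Finset.sum_congr rfl fun x _ => deg_eq_sum H x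
    rw [h1, ← Finset.sum_add_sum_compl A (fun y => ∑ x ∈ R, if H.Adj x y then 1 else 0)]
    have hbound : ∀ y : V ⊕ G.edgeSet, (∑ x ∈ R, if H.Adj x y then 1 else 0) ≤ H.degree y := by
      intro y
      rw [deg_eq_sum]
      refine Finset.sum_le_sum_of_subset_of_nonneg (Finset.subset_univ R) (fun _ _ _ => by positivity)
        |>.trans_eq ?_
      exact Finset.sum_congr rfl fun x _ => by simp [SimpleGraph.adj_comm]
    have hA : ∑ y ∈ A, ∑ x ∈ R, (if H.Adj x y then 1 else 0) ≤ 2 * X.card := by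
      have hzero : ∀ y ∈ A, ¬ y.isRight → (∑ x ∈ R, if H.Adj x y then 1 else 0) = 0 := by
        intro y _ hy
        obtain ⟨v, rfl⟩ := Sum.isLeft_iff.mp (Sum.not_isRight.mp hy)
        refine Finset.sum_eq_zero fun x hx => ?_
        rw [hR, Finset.mem_filter] at hx
        obtain ⟨u, rfl⟩ := Sum.isLeft_iff.mp (Sum.not_isRight.mp hx.2)
        simp [subdiv_not_adj_inl_inl G u v, hH]
      calc ∑ y ∈ A, ∑ x ∈ R, (if H.Adj x y then 1 else 0)
          = ∑ y ∈ X, ∑ x ∈ R, (if H.Adj x y then 1 else 0) := by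
            rw [hX, Finset.sum_filter_of_ne]
            intro y hy hne
            by_contra h
            exact hne (hzero y hy h)
        _ ≤ ∑ y ∈ X, H.degree y := Finset.sum_le_sum fun y hy => hbound y
        _ = 2 * X.card := hXsum
    have hAc : ∑ y ∈ Aᶜ, ∑ x ∈ R, (if H.Adj x y then 1 else 0) ≤ vol H Aᶜ :=
      Finset.sum_le_sum fun y _ => hbound y
    omega
  omega

/-- If `A` is a set of vertices of the subdivision graph `G_E` with
`vol_{G_E}(V' ∖ A) ≤ (1/2)·vol_{G_E}(A)`, then
`vol_{G_E}(A) ≤ 8·|A ∩ X_E| ≤ 8·|A|`. -/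
theorem stmt_16 {V : Type*} [Fintype V] (G : SimpleGraph V)
    (A : Finset (V ⊕ G.edgeSet))
    (hvol : (vol (Subdivision G) Aᶜ : ℝ) ≤ (1 / 2) * (vol (Subdivision G) A : ℝ)) :
    (vol (Subdivision G) A : ℝ) ≤ 8 * ((A.filter (fun x => x.isRight)).card : ℝ) ∧
      8 * ((A.filter (fun x => x.isRight)).card : ℝ) ≤ 8 * (A.card : ℝ) := by
  have key := key_ineq G A
  have hkey : (vol (Subdivision G) A : ℝ) ≤
      4 * ((A.filter (fun x => x.isRight)).card : ℝ) + (vol (Subdivision G) Aᶜ : ℝ) := by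
    exact_mod_cast key
  have hle : ((A.filter (fun x => x.isRight)).card : ℝ) ≤ (A.card : ℝ) := by
    exact_mod_cast Finset.card_filter_le A _
  constructor <;> linarith
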